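/- The asymptotic relative capacity of the coordinated B-channel satisfies the upper bound c_c(γ) ≤ (γ+1) log₂(γ+1) − γ log₂ γ for all γ > 0; equivalently, for all Q, S ≥ 1, log₂ C(S+Q-1, S) ≤ Q[(γ+1)log₂(γ+1) − γ log₂ γ] when S = γQ, and (1/Q) log₂ C(γQ + Q − 1, γQ) → (γ+1)log₂(γ+1) − γ log₂ γ as Q → ∞. -/

import Mathlib

open Filter


lemma chooseA (m q : ℕ) : (m+q).choose m * (m^m * q^q) ≤ (m+q)^(m+q) := by
  calc (m+q).choose m * (m^m * q^q) = m^m * q^((m+q)-m) * (m+q).choose m := by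
        rw [Nat.add_sub_cancel_left]; ring
  _ ≤ ∑ i ∈ Finset.range ((m+q)+1), m^i * q^((m+q)-i) * (m+q).choose i :=
      Finset.single_le_sum (f := fun i => m^i * q^((m+q)-i) * (m+q).choose i)
        (fun i _ => Nat.zero_le _)
        (Finset.mem_range.2 (Nat.lt_succ_of_le (Nat.le_add_right m q)))
  _ = (m + q)^(m+q) := (add_pow m q (m+q)).symm

noncomputable def Efn (n : ℕ) : ℝ := Real.log n.factorial - ((n:ℝ) * Real.log n - n)

lemma Efn_eq {n : ℕ} (hn : 1 ≤ n) :
    Efn n = Real.log (Stirling.stirlingSeq n) + Real.log (2*n) / 2 := by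
  have hn0 : (0:ℝ) < n := by exact_mod_cast hn
  have hfac : (0:ℝ) < n.factorial := by exact_mod_cast n.factorial_pos
  rw [Efn, Stirling.stirlingSeq.eq_1,
    Real.log_div hfac.ne' (by positivity),
    Real.log_mul (by positivity) (by positivity),
    Real.log_sqrt (by positivity), Real.log_pow,
    Real.log_div hn0.ne' (Real.exp_pos 1).ne', Real.log_exp]
  ring

lemma log_div_nat_tendsto : Tendsto (fun n : ℕ => Real.log n / n) atTop (nhds 0) :=
  (Real.isLittleO_log_id_atTop.tendsto_div_nhds_zero).comp tendsto_natCast_atTop_atTop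

lemma Efn_div_tendsto : Tendsto (fun n : ℕ => Efn n / n) atTop (nhds 0) := by
  have h1 : Tendsto (fun n : ℕ => Real.log (Stirling.stirlingSeq n) * ((n:ℝ))⁻¹)
      atTop (nhds 0) := by
    have hπ : (0:ℝ) < √Real.pi := Real.sqrt_pos.2 Real.pi_pos
    have hl := (Real.continuousAt_log hπ.ne').tendsto.comp Stirling.tendsto_stirlingSeq_sqrt_pi
    simpa using hl.mul tendsto_inv_atTop_nhds_zero_nat
  have h2 : Tendsto (fun n : ℕ => Real.log (2*(n:ℝ)) / 2 / n) atTop (nhds 0) := by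
    have hx : Tendsto (fun x : ℝ => Real.log x / x) atTop (nhds 0) :=
      Real.isLittleO_log_id_atTop.tendsto_div_nhds_zero
    have hc : Tendsto (fun n : ℕ => (2:ℝ)*n) atTop atTop :=
      tendsto_natCast_atTop_atTop.const_mul_atTop two_pos
    have h3 := (hx.comp hc).const_mul (1:ℝ)
    rw [mul_zero] at h3
    apply h3.congr'
    filter_upwards [eventually_ge_atTop 1] with n hn
    have hn0 : (n:ℝ) ≠ 0 := Nat.cast_ne_zero.2 (by omega)
    simp only [Function.comp_apply]
    field_simp
  have := h1.add h2
  rw [add_zero] at this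
  apply this.congr'
  filter_upwards [eventually_ge_atTop 1] with n hn
  rw [Efn_eq hn]
  have hn0 : (n:ℝ) ≠ 0 := Nat.cast_ne_zero.2 (by omega)
  field_simp

lemma Ecomp {b : ℕ → ℕ} (hb : Tendsto b atTop atTop) {L : ℝ}
    (hL : Tendsto (fun Q : ℕ => (b Q : ℝ)/Q) atTop (nhds L)) :
    Tendsto (fun Q : ℕ => Efn (b Q) / Q) atTop (nhds 0) := by
  have h1 : Tendsto (fun Q : ℕ => Efn (b Q) / (b Q)) atTop (nhds 0) :=
    Efn_div_tendsto.comp hb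
  have h2 := h1.mul hL
  rw [zero_mul] at h2
  apply h2.congr'
  filter_upwards [hb.eventually (eventually_ge_atTop 1)] with Q hQ
  have hb0 : ((b Q : ℝ)) ≠ 0 := Nat.cast_ne_zero.2 (by omega)
  field_simp

lemma floor_div_tendsto (γ : ℝ) (hγ : 0 < γ) :
    Tendsto (fun Q : ℕ => (⌊γ*Q⌋₊:ℝ)/Q) atTop (nhds γ) := by
  have hlow : Tendsto (fun Q : ℕ => γ - 1/(Q:ℝ)) atTop (nhds γ) := by
    have := tendsto_const_nhds (x := γ) (f := atTop (α := ℕ))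
    simpa using this.sub (tendsto_one_div_atTop_nhds_zero_nat)
  apply tendsto_of_tendsto_of_tendsto_of_le_of_le' hlow tendsto_const_nhds
  · filter_upwards [eventually_ge_atTop 1] with Q hQ
    have hQ0 : (0:ℝ) < Q := by exact_mod_cast hQ
    rw [show γ - 1/(Q:ℝ) = (γ*Q - 1)/Q by field_simp,
      div_le_div_iff_of_pos_right hQ0]
    have := Nat.lt_floor_add_one (γ*(Q:ℝ))
    linarith
  · filter_upwards [eventually_ge_atTop 1] with Q hQ
    have hQ0 : (0:ℝ) < Q := by exact_mod_cast hQ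
    rw [div_le_iff₀ hQ0]
    exact Nat.floor_le (by positivity)

lemma one_sub_div_tendsto : Tendsto (fun Q : ℕ => ((Q - 1 : ℕ):ℝ)/Q) atTop (nhds 1) := by
  have h : Tendsto (fun Q : ℕ => 1 - 1/(Q:ℝ)) atTop (nhds 1) := by
    have := tendsto_const_nhds (x := (1:ℝ)) (f := atTop (α := ℕ))
    simpa using this.sub (tendsto_one_div_atTop_nhds_zero_nat)
  apply h.congr'
  filter_upwards [eventually_ge_atTop 1] with Q hQ
  have hQ0 : (0:ℝ) < Q := by exact_mod_cast hQ
  have : ((Q - 1 : ℕ):ℝ) = (Q:ℝ) - 1 := by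
    push_cast [Nat.cast_sub hQ]; ring
  rw [this]
  field_simp

/-- Upper bound on the relative capacity of the coordinated B-channel:
for `S = γQ`, `log₂ C(S+Q-1, S) ≤ Q·[(γ+1)log₂(γ+1) − γ log₂ γ]`, and
`(1/Q) log₂ C(γQ+Q−1, γQ) → (γ+1)log₂(γ+1) − γ log₂ γ` as `Q → ∞`. -/
theorem coordinated_capacity_upper (γ : ℝ) (hγ : 0 < γ) :
    (∀ Q S : ℕ, 1 ≤ Q → 1 ≤ S → (S : ℝ) = γ * Q →
      Real.logb 2 ((S + Q - 1).choose S : ℝ)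
        ≤ (Q : ℝ) * ((γ + 1) * Real.logb 2 (γ + 1) - γ * Real.logb 2 γ))
    ∧ Tendsto (fun Q : ℕ =>
        (1 / (Q : ℝ)) * Real.logb 2 (((⌊γ * Q⌋₊ + Q - 1).choose ⌊γ * Q⌋₊ : ℝ)))
        atTop (nhds ((γ + 1) * Real.logb 2 (γ + 1) - γ * Real.logb 2 γ)) := by
  have hlog2 : (0:ℝ) < Real.log 2 := Real.log_pos one_lt_two
  constructor
  · intro Q S hQ hS hSγ
    have hQ0 : (0:ℝ) < Q := by exact_mod_cast hQ
    have hS0 : (0:ℝ) < S := by exact_mod_cast hS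
    have h1 : ((S + Q - 1).choose S : ℝ) ≤ ((S + Q).choose S : ℝ) := by
      exact_mod_cast Nat.choose_le_choose S (by omega)
    have h2 : ((S + Q).choose S : ℝ) * ((S:ℝ)^S * (Q:ℝ)^Q) ≤ ((S:ℝ)+Q)^(S+Q) := by
      have h := (Nat.cast_le (α := ℝ)).2 (chooseA S Q)
      push_cast at h
      exact h
    have hcp : (0:ℝ) < ((S + Q - 1).choose S : ℝ) := by
      exact_mod_cast Nat.choose_pos (by omega : S ≤ S + Q - 1)
    have hC : ((S + Q - 1).choose S : ℝ) ≤ ((S:ℝ)+Q)^(S+Q) / ((S:ℝ)^S * (Q:ℝ)^Q) := by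
      rw [le_div_iff₀ (by positivity)]
      exact le_trans (mul_le_mul_of_nonneg_right h1 (by positivity)) h2
    have hlogC : Real.log ((S + Q - 1).choose S : ℝ)
        ≤ ((S:ℝ)+Q)*Real.log ((S:ℝ)+Q) - S*Real.log S - Q*Real.log Q := by
      calc Real.log ((S + Q - 1).choose S : ℝ)
          ≤ Real.log (((S:ℝ)+Q)^(S+Q) / ((S:ℝ)^S * (Q:ℝ)^Q)) := Real.log_le_log hcp hC
        _ = ((S:ℝ)+Q)*Real.log ((S:ℝ)+Q) - S*Real.log S - Q*Real.log Q := by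
            rw [Real.log_div (by positivity) (by positivity),
              Real.log_mul (by positivity) (by positivity),
              Real.log_pow, Real.log_pow, Real.log_pow]
            push_cast
            ring
    have heq : ((S:ℝ)+Q)*Real.log ((S:ℝ)+Q) - S*Real.log S - Q*Real.log Q
        = Q*((γ+1)*Real.log (γ+1) - γ*Real.log γ) := by
      rw [hSγ, show γ*(Q:ℝ) + Q = (γ+1)*Q by ring,
        Real.log_mul (by positivity) hQ0.ne', Real.log_mul hγ.ne' hQ0.ne']
      ring
    simp only [Real.logb]
    rw [show (Q:ℝ)*((γ+1)*(Real.log (γ+1)/Real.log 2) - γ*(Real.log γ/Real.log 2))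
        = ((Q:ℝ)*((γ+1)*Real.log (γ+1) - γ*Real.log γ))/Real.log 2 by ring,
      div_le_div_iff_of_pos_right hlog2]
    linarith
  · set m : ℕ → ℕ := fun Q => ⌊γ*(Q:ℝ)⌋₊ with hm
    have hmQ : Tendsto (fun Q : ℕ => (m Q:ℝ)/Q) atTop (nhds γ) := floor_div_tendsto γ hγ
    have hcQ : Tendsto (fun Q : ℕ => ((Q-1:ℕ):ℝ)/Q) atTop (nhds 1) := one_sub_div_tendsto
    have haQ : Tendsto (fun Q : ℕ => ((m Q + Q - 1:ℕ):ℝ)/Q) atTop (nhds (γ+1)) := by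
      apply (hmQ.add hcQ).congr'
      filter_upwards [eventually_ge_atTop 1] with Q hQ
      have h1 : m Q + Q - 1 = m Q + (Q - 1) := by omega
      rw [h1, Nat.cast_add, add_div]
    have hm_top : Tendsto m atTop atTop :=
      tendsto_nat_floor_atTop.comp (tendsto_natCast_atTop_atTop.const_mul_atTop hγ)
    have hc_top : Tendsto (fun Q : ℕ => Q - 1) atTop atTop := by
      rw [tendsto_atTop_atTop]
      exact fun b => ⟨b + 1, fun a ha => by omega⟩
    have ha_top : Tendsto (fun Q : ℕ => m Q + Q - 1) atTop atTop :=
      tendsto_atTop_mono (fun Q => by omega) hc_top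
    have hEa := Ecomp ha_top haQ
    have hEm := Ecomp hm_top hmQ
    have hEc := Ecomp hc_top hcQ
    have T1 : Tendsto (fun Q : ℕ => ((m Q + Q - 1:ℕ):ℝ)/Q * Real.log (((m Q + Q - 1:ℕ):ℝ)/Q))
        atTop (nhds ((γ+1)*Real.log (γ+1))) := (Real.continuous_mul_log.tendsto (γ+1)).comp haQ
    have T2 : Tendsto (fun Q : ℕ => (m Q:ℝ)/Q * Real.log ((m Q:ℝ)/Q))
        atTop (nhds (γ*Real.log γ)) := (Real.continuous_mul_log.tendsto γ).comp hmQ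
    have T3 : Tendsto (fun Q : ℕ => ((Q-1:ℕ):ℝ)/Q * Real.log (((Q-1:ℕ):ℝ)/Q))
        atTop (nhds (1*Real.log 1)) := (Real.continuous_mul_log.tendsto 1).comp hcQ
    have hG := (((T1.sub T2).sub T3).add ((hEa.sub hEm).sub hEc))
    rw [Real.log_one, mul_zero, sub_zero, sub_zero, sub_zero, add_zero] at hG
    have hF : Tendsto (fun Q : ℕ => (1/(Q:ℝ)) * Real.log (((m Q + Q - 1).choose (m Q) : ℕ) : ℝ))
        atTop (nhds ((γ+1)*Real.log (γ+1) - γ*Real.log γ)) := by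
      apply hG.congr'
      filter_upwards [eventually_ge_atTop 2, hm_top.eventually (eventually_ge_atTop 1)]
        with Q hQ2 hk1
      set k := m Q with hk
      set c := Q - 1 with hc
      have hQ0 : (0:ℝ) < Q := by exact_mod_cast (by omega : 0 < Q)
      have hae : k + Q - 1 = k + c := by omega
      simp only [hae]
      have hc1 : 1 ≤ c := by omega
      have hkR : (0:ℝ) < k := by exact_mod_cast hk1
      have hcR : (0:ℝ) < c := by exact_mod_cast hc1
      have haR : (0:ℝ) < ((k+c:ℕ):ℝ) := by push_cast; linarith
      have hfact : ∀ n : ℕ, Real.log (n.factorial:ℝ) = Efn n + ((n:ℝ)*Real.log n - n) :=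
        fun n => by rw [Efn]; ring
      have hchoose : ((k+c).choose k : ℝ)
          = (((k+c).factorial:ℝ))/((k.factorial:ℝ)*(c.factorial:ℝ)) := by
        rw [eq_div_iff (by positivity)]
        have h := Nat.choose_mul_factorial_mul_factorial (Nat.le_add_right k c)
        rw [Nat.add_sub_cancel_left] at h
        exact_mod_cast (by rw [← h]; ring :
          (k+c).choose k * (k.factorial * c.factorial) = (k+c).factorial)
      have hlogch : Real.log ((k+c).choose k : ℝ)
          = Real.log ((k+c).factorial:ℝ) - Real.log (k.factorial:ℝ)
            - Real.log (c.factorial:ℝ) := by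
        rw [hchoose, Real.log_div (by positivity) (by positivity),
          Real.log_mul (by positivity) (by positivity)]
        ring
      have hla : Real.log ((k+c:ℕ):ℝ) = Real.log (((k+c:ℕ):ℝ)/Q) + Real.log Q := by
        rw [Real.log_div haR.ne' hQ0.ne']; ring
      have hlk : Real.log ((k:ℕ):ℝ) = Real.log (((k:ℕ):ℝ)/Q) + Real.log Q := by
        rw [Real.log_div hkR.ne' hQ0.ne']; ring
      have hlc : Real.log ((c:ℕ):ℝ) = Real.log (((c:ℕ):ℝ)/Q) + Real.log Q := by
        rw [Real.log_div hcR.ne' hQ0.ne']; ring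
      have hcast : ((k+c:ℕ):ℝ) = (k:ℝ) + c := by push_cast; ring
      rw [hlogch, hfact (k+c), hfact k, hfact c, hla, hlk, hlc, hcast]
      field_simp
      ring
    have hfun : (fun Q : ℕ =>
        (1 / (Q : ℝ)) * Real.logb 2 (((⌊γ * Q⌋₊ + Q - 1).choose ⌊γ * Q⌋₊ : ℝ)))
        = fun Q : ℕ => (1/(Q:ℝ)) * Real.log (((m Q + Q - 1).choose (m Q) : ℕ) : ℝ)
          * (Real.log 2)⁻¹ := by
      funext Q
      simp only [Real.logb, hm]
      ring
    rw [hfun, show (γ + 1) * Real.logb 2 (γ + 1) - γ * Real.logb 2 γ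
      = ((γ+1)*Real.log (γ+1) - γ*Real.log γ) * (Real.log 2)⁻¹ by simp only [Real.logb]; ring]
    exact hF.mul_const _
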